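/- Let T be a table with suppressed cell set E and suppressed graph H, let D be a strongly connected component of H, and let Y be a minimal edge cut of D. Then there exist coefficients c : E → ℝ with {e ∈ E : c(e) ≠ 0} = Y such that the linear form x ↦ Σ_{e∈E} c(e)·x(e) takes the same value at every bounded feasible assignment x of T (i.e., T has a linear invariant whose effective area is exactly Y). -/

import Mathlib

/-- A two-dimensional table: values, lower/upper bounds, and a set of suppressed cells. -/
structure Table (R C : Type*) where
  val : R × C → ℝ
  lo : R × C → ℝ
  hi : R × C → ℝ
  sup : Set (R × C)
  lo_le : ∀ e, lo e ≤ val e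
  le_hi : ∀ e, val e ≤ hi e
  lo_lt_hi : ∀ e, lo e < hi e

variable {R C : Type*}

/-- A bounded feasible assignment of a table. -/
def BFA [Fintype R] [Fintype C] (T : Table R C) (x : R × C → ℝ) : Prop :=
  (∀ e, e ∉ T.sup → x e = T.val e) ∧
  (∀ e ∈ T.sup, T.lo e ≤ x e ∧ x e ≤ T.hi e) ∧
  (∀ i : R, ∑ j, x (i, j) = ∑ j, T.val (i, j)) ∧
  (∀ j : C, ∑ i, x (i, j) = ∑ i, T.val (i, j))

/-- One traversable step in the mixed graph with edge set `S`: the edge of a cell `e`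
may be traversed from its row endpoint to its column endpoint iff `val e < hi e`,
and from its column endpoint to its row endpoint iff `lo e < val e`. -/
def MStep (T : Table R C) (S : Set (R × C)) (v w : R ⊕ C) : Prop :=
  ∃ e ∈ S, (T.val e < T.hi e ∧ v = Sum.inl e.1 ∧ w = Sum.inr e.2) ∨
           (T.lo e < T.val e ∧ v = Sum.inr e.2 ∧ w = Sum.inl e.1)

/-- Reachability along traversable paths in the mixed graph with edge set `S`. -/
def MReach (T : Table R C) (S : Set (R × C)) : (R ⊕ C) → (R ⊕ C) → Prop :=
  Relation.ReflTransGen (MStep T S)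

/-- Mutual reachability in the mixed graph with edge set `S`. -/
def MutReach (T : Table R C) (S : Set (R × C)) (v w : R ⊕ C) : Prop :=
  MReach T S v w ∧ MReach T S w v

/-- `D` is a strongly connected component of the mixed graph with edge set `S`:
an equivalence class of mutual reachability. -/
def IsSCC (T : Table R C) (S : Set (R × C)) (D : Set (R ⊕ C)) : Prop :=
  ∃ v, D = {w | MutReach T S v w}

/-- Direction-blind adjacency via an edge in `S`. -/
def Adj (S : Set (R × C)) (v w : R ⊕ C) : Prop :=
  ∃ e ∈ S, (v = Sum.inl e.1 ∧ w = Sum.inr e.2) ∨ (v = Sum.inr e.2 ∧ w = Sum.inl e.1)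

/-- Direction-blind connectivity via edges in `S`. -/
def Conn (S : Set (R × C)) : (R ⊕ C) → (R ⊕ C) → Prop :=
  Relation.ReflTransGen (Adj S)

/-- `D` is a connected component of the (direction-blind) graph with edge set `S`. -/
def IsCC (S : Set (R × C)) (D : Set (R ⊕ C)) : Prop :=
  ∃ v, D = {w | Conn S v w}

/-- The edges of `S` with both endpoints in the vertex set `D`. -/
def EdgesIn (S : Set (R × C)) (D : Set (R ⊕ C)) : Set (R × C) :=
  {e | e ∈ S ∧ Sum.inl e.1 ∈ D ∧ Sum.inr e.2 ∈ D}

/-- All vertices of `D` are joined by direction-blind paths using edges in `S`. -/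
def ConnectedOn (S : Set (R × C)) (D : Set (R ⊕ C)) : Prop :=
  ∀ v ∈ D, ∀ w ∈ D, Conn S v w

lemma sumA [Fintype R] [Fintype C] (T : Table R C) (x : R × C → ℝ) (hx : BFA T x)
    (φ : R ⊕ C → ℝ) :
    ∑ e : R × C, (φ (Sum.inl e.1) - φ (Sum.inr e.2)) * (x e - T.val e) = 0 := by
  have h1 : ∑ e : R × C, φ (Sum.inl e.1) * (x e - T.val e) = 0 := by
    rw [Fintype.sum_prod_type]
    refine Finset.sum_eq_zero fun i _ => ?_
    show ∑ j : C, φ (Sum.inl i) * (x (i, j) - T.val (i, j)) = 0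
    rw [← Finset.mul_sum]
    have : ∑ j, (x (i, j) - T.val (i, j)) = 0 := by
      rw [Finset.sum_sub_distrib, hx.2.2.1 i, sub_self]
    rw [this, mul_zero]
  have h2 : ∑ e : R × C, φ (Sum.inr e.2) * (x e - T.val e) = 0 := by
    rw [Fintype.sum_prod_type_right]
    refine Finset.sum_eq_zero fun j _ => ?_
    show ∑ i : R, φ (Sum.inr j) * (x (i, j) - T.val (i, j)) = 0
    rw [← Finset.mul_sum]
    have : ∑ i, (x (i, j) - T.val (i, j)) = 0 := by
      rw [Finset.sum_sub_distrib, hx.2.2.2 j, sub_self]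
    rw [this, mul_zero]
  simp_rw [sub_mul]
  rw [Finset.sum_sub_distrib, h1, h2, sub_self]

lemma cut_fixed [Fintype R] [Fintype C] (T : Table R C) (x : R × C → ℝ) (hx : BFA T x)
    (U : Set (R ⊕ C)) (hU : ∀ v ∈ U, ∀ w, MStep T T.sup v w → w ∈ U)
    (e : R × C) (he : e ∈ T.sup)
    (hcross : (Sum.inl e.1 ∈ U ∧ Sum.inr e.2 ∉ U) ∨ (Sum.inl e.1 ∉ U ∧ Sum.inr e.2 ∈ U)) :
    x e = T.val e := by
  classical
  set φ : R ⊕ C → ℝ := fun v => if v ∈ U then 1 else 0 with hφ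
  set f : R × C → ℝ := fun e => (φ (Sum.inl e.1) - φ (Sum.inr e.2)) * (x e - T.val e) with hf
  have hsum : ∑ g : R × C, f g = 0 := sumA T x hx φ
  have hnp : ∀ g ∈ Finset.univ, f g ≤ (0 : ℝ) := by
    intro g _
    by_cases hg : g ∈ T.sup
    · by_cases h1 : Sum.inl g.1 ∈ U <;> by_cases h2 : Sum.inr g.2 ∈ U <;>
        simp only [hf, hφ, h1, h2, if_pos, if_neg, if_true, if_false, sub_self, zero_mul,
          sub_zero, zero_sub, one_mul, neg_mul, le_refl]
      · -- inl ∈ U, inr ∉ U : val g = hi g, so x g ≤ val g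
        have hnl : ¬ T.val g < T.hi g := fun hlt =>
          h2 (hU _ h1 _ ⟨g, hg, Or.inl ⟨hlt, rfl, rfl⟩⟩)
        have hval : T.val g = T.hi g := le_antisymm (T.le_hi g) (not_lt.1 hnl)
        have := (hx.2.1 g hg).2
        nlinarith [this, hval]
      · -- inl ∉ U, inr ∈ U : val g = lo g, so x g ≥ val g
        have hnl : ¬ T.lo g < T.val g := fun hlt =>
          h1 (hU _ h2 _ ⟨g, hg, Or.inr ⟨hlt, rfl, rfl⟩⟩)
        have hval : T.val g = T.lo g := le_antisymm (not_lt.1 hnl) (T.lo_le g)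
        have := (hx.2.1 g hg).1
        nlinarith [this, hval]
    · simp [hf, hx.1 g hg]
  have hz : ∀ g ∈ Finset.univ, f g = 0 :=
    (Finset.sum_eq_zero_iff_of_nonpos hnp).1 hsum
  have hfe := hz e (Finset.mem_univ e)
  rcases hcross with ⟨h1, h2⟩ | ⟨h1, h2⟩ <;>
    simp only [hf, hφ, h1, h2, if_true, if_false, sub_zero, zero_sub, one_mul,
      neg_mul, neg_eq_zero, sub_eq_zero] at hfe <;>
    first
      | exact hfe
      | linarith [hfe]

lemma crossD_fixed [Fintype R] [Fintype C] (T : Table R C) (x : R × C → ℝ) (hx : BFA T x)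
    (v : R ⊕ C) (e : R × C) (he : e ∈ T.sup)
    (h : (MutReach T T.sup v (Sum.inl e.1) ∧ ¬ MutReach T T.sup v (Sum.inr e.2)) ∨
         (¬ MutReach T T.sup v (Sum.inl e.1) ∧ MutReach T T.sup v (Sum.inr e.2))) :
    x e = T.val e := by
  set U : Set (R ⊕ C) := {w | MReach T T.sup v w} with hUdef
  set V : Set (R ⊕ C) := {w | ¬ MReach T T.sup w v} with hVdef
  have hUcl : ∀ p ∈ U, ∀ w, MStep T T.sup p w → w ∈ U := fun p hp w hs =>
    Relation.ReflTransGen.tail hp hs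
  have hVcl : ∀ p ∈ V, ∀ w, MStep T T.sup p w → w ∈ V := by
    intro p hp w hs hw
    exact hp (Relation.ReflTransGen.head hs hw)
  rcases h with ⟨⟨hp1, hp2⟩, hq⟩ | ⟨hq, ⟨hp1, hp2⟩⟩
  · by_cases hq1 : MReach T T.sup v (Sum.inr e.2)
    · have hq2 : ¬ MReach T T.sup (Sum.inr e.2) v := fun h' => hq ⟨hq1, h'⟩
      exact cut_fixed T x hx V hVcl e he (Or.inr ⟨fun h' => h' hp2, hq2⟩)
    · exact cut_fixed T x hx U hUcl e he (Or.inl ⟨hp1, hq1⟩)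
  · by_cases hq1 : MReach T T.sup v (Sum.inl e.1)
    · have hq2 : ¬ MReach T T.sup (Sum.inl e.1) v := fun h' => hq ⟨hq1, h'⟩
      exact cut_fixed T x hx V hVcl e he (Or.inl ⟨hq2, fun h' => h' hp2⟩)
    · exact cut_fixed T x hx U hUcl e he (Or.inr ⟨hq1, hp1⟩)

lemma conn_symm {S : Set (R × C)} {a b : R ⊕ C} (h : Conn S a b) : Conn S b a := by
  induction h with
  | refl => exact Relation.ReflTransGen.refl
  | tail _ step ih =>
    obtain ⟨e, heS, hor⟩ := step
    refine Relation.ReflTransGen.head ⟨e, heS, ?_⟩ ih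
    rcases hor with ⟨h1, h2⟩ | ⟨h1, h2⟩
    · exact Or.inr ⟨h2, h1⟩
    · exact Or.inl ⟨h2, h1⟩

lemma conn_mono {S S' : Set (R × C)} (hSS : S ⊆ S') {a b : R ⊕ C} (h : Conn S a b) :
    Conn S' a b := by
  induction h with
  | refl => exact Relation.ReflTransGen.refl
  | tail _ step ih =>
    obtain ⟨e, heS, hor⟩ := step
    exact Relation.ReflTransGen.tail ih ⟨e, hSS heS, hor⟩

lemma conn_insert {S : Set (R × C)} {e : R × C} {a b : R ⊕ C}
    (h : Conn (insert e S) a b) :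
    Conn S a b ∨ Conn S a (Sum.inl e.1) ∨ Conn S a (Sum.inr e.2) := by
  induction h with
  | refl => exact Or.inl Relation.ReflTransGen.refl
  | tail _ step ih =>
    obtain ⟨f, hf, hor⟩ := step
    rcases Set.mem_insert_iff.1 hf with rfl | hfS
    · rcases hor with ⟨hz, _⟩ | ⟨hz, _⟩
      · rcases ih with h | h | h
        · exact Or.inr (Or.inl (hz ▸ h))
        · exact Or.inr (Or.inl h)
        · exact Or.inr (Or.inr h)
      · rcases ih with h | h | h
        · exact Or.inr (Or.inr (hz ▸ h))
        · exact Or.inr (Or.inl h)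
        · exact Or.inr (Or.inr h)
    · rcases ih with h | h | h
      · exact Or.inl (Relation.ReflTransGen.tail h ⟨f, hfS, hor⟩)
      · exact Or.inr (Or.inl h)
      · exact Or.inr (Or.inr h)

lemma conn_insert_of_conn {S : Set (R × C)} {e : R × C}
    (hee : Conn S (Sum.inl e.1) (Sum.inr e.2)) {a b : R ⊕ C}
    (h : Conn (insert e S) a b) : Conn S a b := by
  induction h with
  | refl => exact Relation.ReflTransGen.refl
  | tail _ step ih =>
    obtain ⟨f, hf, hor⟩ := step
    rcases Set.mem_insert_iff.1 hf with rfl | hfS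
    · rcases hor with ⟨hz, hw⟩ | ⟨hz, hw⟩
      · rw [hw]; rw [hz] at ih; exact ih.trans hee
      · rw [hw]; rw [hz] at ih; exact ih.trans (conn_symm hee)
    · exact Relation.ReflTransGen.tail ih ⟨f, hfS, hor⟩

/-- For every minimal edge cut `Y` of a strongly connected component `D` of the
suppressed graph, the table has a linear invariant with effective area exactly `Y`. -/
theorem stmt1 [Fintype R] [Fintype C] [Nonempty R] [Nonempty C]
    (T : Table R C) (D : Set (R ⊕ C)) (hD : IsSCC T T.sup D)
    (Y : Set (R × C)) (hYsub : Y ⊆ EdgesIn T.sup D)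
    (hcut : ¬ ConnectedOn (EdgesIn T.sup D \ Y) D)
    (hmin : ∀ Y' ⊂ Y, ConnectedOn (EdgesIn T.sup D \ Y') D) :
    ∃ c : R × C → ℝ, {e | c e ≠ 0} = Y ∧
      ∃ ρ : ℝ, ∀ x, BFA T x → ∑ e : R × C, c e * x e = ρ := by
  classical
  obtain ⟨v, hDv⟩ := hD
  rw [ConnectedOn] at hcut
  push_neg at hcut
  obtain ⟨v₀, hv₀, w₀, hw₀, hnc⟩ := hcut
  set S : Set (R × C) := EdgesIn T.sup D \ Y with hSdef
  set A : Set (R ⊕ C) := {w | w ∈ D ∧ Conn S v₀ w} with hAdef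
  have hAD : A ⊆ D := fun w hw => hw.1
  -- each edge of Y has one endpoint in A and the other in D \ A
  have hsplit : ∀ e ∈ Y,
      (Sum.inl e.1 ∈ A ∧ Sum.inr e.2 ∈ D ∧ Sum.inr e.2 ∉ A) ∨
      (Sum.inr e.2 ∈ A ∧ Sum.inl e.1 ∈ D ∧ Sum.inl e.1 ∉ A) := by
    intro e he
    have heE := hYsub he
    have hconn' : ConnectedOn (EdgesIn T.sup D \ (Y \ {e})) D :=
      hmin (Y \ {e}) (Set.sdiff_singleton_ssubset.2 he)
    have hsub : EdgesIn T.sup D \ (Y \ {e}) ⊆ insert e S := by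
      rintro f ⟨hf1, hf2⟩
      by_cases hfe : f = e
      · exact Set.mem_insert_iff.2 (Or.inl hfe)
      · exact Set.mem_insert_iff.2 (Or.inr ⟨hf1, fun hfY => hf2 ⟨hfY, hfe⟩⟩)
    have hc : Conn (insert e S) v₀ w₀ := conn_mono hsub (hconn' v₀ hv₀ w₀ hw₀)
    have hne : ¬ Conn S (Sum.inl e.1) (Sum.inr e.2) := fun hee =>
      hnc (conn_insert_of_conn hee hc)
    have h1 : Conn S v₀ (Sum.inl e.1) ∨ Conn S v₀ (Sum.inr e.2) := by
      rcases conn_insert hc with h | h | h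
      · exact absurd h hnc
      · exact Or.inl h
      · exact Or.inr h
    rcases h1 with h | h
    · exact Or.inl ⟨⟨heE.2.1, h⟩, heE.2.2,
        fun hA' => hne ((conn_symm h).trans hA'.2)⟩
    · exact Or.inr ⟨⟨heE.2.2, h⟩, heE.2.1,
        fun hA' => hne ((conn_symm hA'.2).trans h)⟩
  set c : R × C → ℝ := fun e =>
    if e ∈ T.sup ∧ Sum.inl e.1 ∈ A ∧ Sum.inr e.2 ∈ D ∧ Sum.inr e.2 ∉ A then 1
    else if e ∈ T.sup ∧ Sum.inr e.2 ∈ A ∧ Sum.inl e.1 ∈ D ∧ Sum.inl e.1 ∉ A then -1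
    else 0 with hcdef
  refine ⟨c, ?_, ∑ e : R × C, c e * T.val e, ?_⟩
  · ext e
    simp only [Set.mem_setOf_eq]
    constructor
    · intro hne
      by_contra heY
      apply hne
      rw [hcdef]
      beta_reduce
      split_ifs with h1 h2
      · exfalso
        have heS : e ∈ S := ⟨⟨h1.1, hAD h1.2.1, h1.2.2.1⟩, heY⟩
        exact h1.2.2.2 ⟨h1.2.2.1,
          Relation.ReflTransGen.tail h1.2.1.2 ⟨e, heS, Or.inl ⟨rfl, rfl⟩⟩⟩
      · exfalso
        have heS : e ∈ S := ⟨⟨h2.1, h2.2.2.1, hAD h2.2.1⟩, heY⟩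
        exact h2.2.2.2 ⟨h2.2.2.1,
          Relation.ReflTransGen.tail h2.2.1.2 ⟨e, heS, Or.inr ⟨rfl, rfl⟩⟩⟩
      · rfl
    · intro heY
      have hesup : e ∈ T.sup := (hYsub heY).1
      rcases hsplit e heY with h | h
      · rw [hcdef]
        beta_reduce
        rw [if_pos ⟨hesup, h.1, h.2.1, h.2.2⟩]
        norm_num
      · rw [hcdef]
        beta_reduce
        rw [if_neg (fun hcond => hcond.2.2.2 h.1), if_pos ⟨hesup, h.1, h.2.1, h.2.2⟩]
        norm_num
  · intro x hx
    set φ : R ⊕ C → ℝ := fun w => if w ∈ A then 1 else 0 with hφ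
    have hkey : ∀ e : R × C,
        c e * (x e - T.val e) = (φ (Sum.inl e.1) - φ (Sum.inr e.2)) * (x e - T.val e) := by
      intro e
      by_cases hes : e ∈ T.sup
      · by_cases h1 : Sum.inl e.1 ∈ A <;> by_cases h2 : Sum.inr e.2 ∈ A
        · have : c e = 0 := by
            rw [hcdef]
            beta_reduce
            rw [if_neg (fun h => h.2.2.2 h2), if_neg (fun h => h.2.2.2 h1)]
          rw [this, hφ]
          simp [h1, h2]
        · by_cases hD2 : Sum.inr e.2 ∈ D
          · have : c e = 1 := by
              rw [hcdef]; beta_reduce; rw [if_pos ⟨hes, h1, hD2, h2⟩]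
            rw [this, hφ]
            simp [h1, h2]
          · have hx0 : x e = T.val e := by
              refine crossD_fixed T x hx v e hes (Or.inl ⟨?_, ?_⟩)
              · have := hAD h1; rwa [hDv] at this
              · intro hm; exact hD2 (hDv ▸ Set.mem_setOf_eq ▸ hm)
            rw [hx0, sub_self, mul_zero, mul_zero]
        · by_cases hD1 : Sum.inl e.1 ∈ D
          · have : c e = -1 := by
              rw [hcdef]; beta_reduce
              rw [if_neg (fun h => h1 h.2.1), if_pos ⟨hes, h2, hD1, h1⟩]
            rw [this, hφ]
            simp [h1, h2]
          · have hx0 : x e = T.val e := by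
              refine crossD_fixed T x hx v e hes (Or.inr ⟨?_, ?_⟩)
              · intro hm; exact hD1 (hDv ▸ Set.mem_setOf_eq ▸ hm)
              · have := hAD h2; rwa [hDv] at this
            rw [hx0, sub_self, mul_zero, mul_zero]
        · have : c e = 0 := by
            rw [hcdef]; beta_reduce
            rw [if_neg (fun h => h1 h.2.1), if_neg (fun h => h2 h.2.1)]
          rw [this, hφ]
          simp [h1, h2]
      · rw [hx.1 e hes, sub_self, mul_zero, mul_zero]
    have hsum0 : ∑ e : R × C, c e * (x e - T.val e) = 0 := by
      rw [Finset.sum_congr rfl (fun e _ => hkey e)]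
      exact sumA T x hx φ
    have : ∑ e : R × C, c e * x e
        = ∑ e : R × C, c e * T.val e + ∑ e : R × C, c e * (x e - T.val e) := by
      rw [← Finset.sum_add_distrib]
      exact Finset.sum_congr rfl fun e _ => by ring
    rw [this, hsum0, add_zero]
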